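/- arXiv:1012.2824 — 3 statements merged into one kernel-verified Lean document; each statement's English description precedes it below -/
import Mathlib

section
/- For a groupoid G, the inclusion functor from abelian groups into groupoids (viewing an abelian group as a one-object groupoid) has a left adjoint, the universal abelianisation G ↦ G^totab; equivalently, for every groupoid G there is an abelian group G^totab and a morphism υ : G → G^totab universal among morphisms from G to abelian groups. -/
open CategoryTheory

universe w v u

/-- A group regarded as a one-object groupoid (with `f ≫ g = f * g`,
following the composition convention of the paper). -/
def GroupAsGroupoid (A : Type*) : Type := Unit

instance (A : Type*) [Group A] : Groupoid (GroupAsGroupoid A) where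
  Hom _ _ := A
  id _ := (1 : A)
  comp f g := f * g
  id_comp := one_mul
  comp_id := mul_one
  assoc := mul_assoc
  inv f := f⁻¹
  inv_comp := inv_mul_cancel
  comp_inv := mul_inv_cancel

/-- A morphism in `GroupAsGroupoid A`, regarded as an element of the group `A`. -/
def toGrp {A : Type*} [Group A] {a b : GroupAsGroupoid A} (f : a ⟶ b) : A := f

/-- The generators: all morphisms of `G`. -/
abbrev TotAbGen (G : Type u) [Groupoid.{v} G] : Type (max u v) := Σ a b : G, a ⟶ b

/-- The relations imposing functoriality. -/
def TotAbRels (G : Type u) [Groupoid.{v} G] : Set (FreeGroup (TotAbGen G)) :=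
  { r | ∃ (a b c : G) (f : a ⟶ b) (g : b ⟶ c),
      r = (FreeGroup.of (⟨a, c, f ≫ g⟩ : TotAbGen G))⁻¹ *
        (FreeGroup.of (⟨a, b, f⟩ : TotAbGen G) * FreeGroup.of (⟨b, c, g⟩ : TotAbGen G)) }

lemma totAb_rel {G : Type u} [Groupoid.{v} G] {a b c : G} (f : a ⟶ b) (g : b ⟶ c) :
    (PresentedGroup.of ⟨a, c, f ≫ g⟩ : PresentedGroup (TotAbRels G)) =
      PresentedGroup.of ⟨a, b, f⟩ * PresentedGroup.of ⟨b, c, g⟩ := by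
  have hr : ((FreeGroup.of (⟨a, c, f ≫ g⟩ : TotAbGen G))⁻¹ *
      (FreeGroup.of (⟨a, b, f⟩ : TotAbGen G) * FreeGroup.of (⟨b, c, g⟩ : TotAbGen G)))
      ∈ TotAbRels G := ⟨a, b, c, f, g, rfl⟩
  have h1 : PresentedGroup.mk (TotAbRels G)
      ((FreeGroup.of (⟨a, c, f ≫ g⟩ : TotAbGen G))⁻¹ *
      (FreeGroup.of (⟨a, b, f⟩ : TotAbGen G) * FreeGroup.of (⟨b, c, g⟩ : TotAbGen G))) = 1 :=
    (QuotientGroup.eq_one_iff _).mpr (Subgroup.subset_normalClosure hr)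
  rw [map_mul, map_mul, map_inv] at h1
  exact inv_mul_eq_one.mp h1

/-- every groupoid `G` admits a universal abelianisation: an abelian group
`G^totab` together with a morphism (functor) `υ : G → G^totab` which is universal among
morphisms from `G` to abelian groups; i.e. the inclusion of abelian groups into groupoids
has a left adjoint. -/
theorem stmt5 (G : Type u) [Groupoid.{v} G] :
    ∃ (T : Type (max u v)) (_ : CommGroup T) (υ : G ⥤ GroupAsGroupoid T),
      ∀ (A : Type w) (_ : CommGroup A) (Φ : G ⥤ GroupAsGroupoid A),
        ∃! f : T →* A, ∀ {a b : G} (m : a ⟶ b), toGrp (Φ.map m) = f (toGrp (υ.map m)) := by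
  classical
  set P := PresentedGroup (TotAbRels G) with hP
  refine ⟨Abelianization P, inferInstance, ?_, ?_⟩
  · -- the functor υ
    refine
      { obj := fun _ => (),
        map := fun {a b} m => (Abelianization.of (PresentedGroup.of ⟨a, b, m⟩) :
          Abelianization P),
        map_id := ?_, map_comp := ?_ }
    · intro a
      have h := totAb_rel (G := G) (𝟙 a) (𝟙 a)
      rw [Category.id_comp] at h
      have h2 : (Abelianization.of (PresentedGroup.of (⟨a, a, 𝟙 a⟩ : TotAbGen G)) :
          Abelianization P) =
          Abelianization.of (PresentedGroup.of ⟨a, a, 𝟙 a⟩) *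
          Abelianization.of (PresentedGroup.of ⟨a, a, 𝟙 a⟩) := by
        rw [← map_mul, ← h]
      exact (left_eq_mul.mp h2 : (_ : Abelianization P) = 1)
    · intro a b c f g
      show (Abelianization.of (PresentedGroup.of (⟨a, c, f ≫ g⟩ : TotAbGen G)) :
          Abelianization P) = _
      rw [totAb_rel, map_mul]; rfl
  · intro A _ Φ
    set φ : TotAbGen G → A := fun m => toGrp (Φ.map m.2.2) with hφ
    have hcomp : ∀ {a b c : G} (f : a ⟶ b) (g : b ⟶ c),
        toGrp (Φ.map (f ≫ g)) = toGrp (Φ.map f) * toGrp (Φ.map g) := by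
      intro a b c f g
      rw [Φ.map_comp]; rfl
    have hrels : ∀ r ∈ TotAbRels G, FreeGroup.lift φ r = 1 := by
      rintro r ⟨a, b, c, f, g, rfl⟩
      simp only [map_mul, map_inv, FreeGroup.lift_apply_of, hφ]
      rw [hcomp f g]
      group
    set f0 : P →* A := PresentedGroup.toGroup hrels with hf0
    refine ⟨Abelianization.lift f0, ?_, ?_⟩
    · intro a b m
      show toGrp (Φ.map m) = Abelianization.lift f0
        (Abelianization.of (PresentedGroup.of ⟨a, b, m⟩))
      rw [Abelianization.lift_apply_of, hf0, PresentedGroup.toGroup.of]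
    · intro g hg
      have key : g.comp Abelianization.of = (Abelianization.lift f0).comp Abelianization.of := by
        apply PresentedGroup.ext
        intro x
        obtain ⟨a, b, m⟩ := x
        simp only [MonoidHom.comp_apply]
        rw [Abelianization.lift_apply_of, hf0, PresentedGroup.toGroup.of]
        exact (hg m).symm
      exact Abelianization.hom_ext _ _ key
end

section
/- Let G be a connected (transitive) groupoid, a₀ an object of G, and T a wide tree subgroupoid of G. Then the universal abelianisation G^totab is isomorphic to the direct sum of the abelianisation of the vertex group G(a₀) and the free abelian group on the objects of G other than a₀. -/
open CategoryTheory

universe v u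

namespace Stmt6Aux

variable {G : Type u} [Groupoid.{v} G] {S : Subgroupoid G}
variable (htree : ∀ a b : G, ∃! f : a ⟶ b, f ∈ S.arrows a b)

/-- The unique tree arrow from `a` to `b`. -/
noncomputable def tr (a b : G) : a ⟶ b := (htree a b).exists.choose

lemma tr_mem (a b : G) : tr htree a b ∈ S.arrows a b := (htree a b).exists.choose_spec

lemma tr_comp (a b c : G) : tr htree a b ≫ tr htree b c = tr htree a c :=
  (htree a c).unique (S.mul (tr_mem htree a b) (tr_mem htree b c)) (tr_mem htree a c)

lemma tr_id (a : G) : tr htree a a = 𝟙 a :=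
  (htree a a).unique (tr_mem htree a a) (Subgroupoid.id_mem_of_src S (tr_mem htree a a))

open Classical in
/-- The generator of the free abelian group attached to an object (`0` for `a₀`). -/
noncomputable def dl (a₀ a : G) : FreeAbelianGroup {x : G // x ≠ a₀} :=
  if h : a = a₀ then 0 else FreeAbelianGroup.of ⟨a, h⟩

lemma dl_a₀ (a₀ : G) : dl (G := G) a₀ a₀ = 0 := by simp [dl]

lemma dl_ne (a₀ a : G) (h : a ≠ a₀) : dl a₀ a = FreeAbelianGroup.of ⟨a, h⟩ := by
  simp [dl, h]

/-- The comparison functor from `G` to the candidate abelian group. -/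
noncomputable def Phi (a₀ : G) :
    G ⥤ GroupAsGroupoid (Abelianization (a₀ ⟶ a₀) ×
      Multiplicative (FreeAbelianGroup {a : G // a ≠ a₀})) where
  obj _ := (() : Unit)
  map {a b} f :=
    ((Abelianization.of (tr htree a₀ a ≫ f ≫ tr htree b a₀),
      Multiplicative.ofAdd (dl a₀ b - dl a₀ a)) :
      Abelianization (a₀ ⟶ a₀) × Multiplicative (FreeAbelianGroup {a : G // a ≠ a₀}))
  map_id a := by
    have h1 : tr htree a₀ a ≫ 𝟙 a ≫ tr htree a a₀ = 𝟙 a₀ := by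
      rw [Category.id_comp, tr_comp, tr_id]
    show (_, _) = ((1, 1) : Abelianization (a₀ ⟶ a₀) ×
      Multiplicative (FreeAbelianGroup {a : G // a ≠ a₀}))
    rw [h1]
    refine Prod.ext ?_ ?_
    · show Abelianization.of (1 : a₀ ⟶ a₀) = 1
      exact map_one _
    · show Multiplicative.ofAdd (dl a₀ a - dl a₀ a) = 1
      rw [sub_self]; rfl
  map_comp {a b c} f g := by
    show (_, _) = ((_ * _, _ * _) : Abelianization (a₀ ⟶ a₀) ×
      Multiplicative (FreeAbelianGroup {a : G // a ≠ a₀}))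
    refine Prod.ext ?_ ?_
    · show Abelianization.of (tr htree a₀ a ≫ (f ≫ g) ≫ tr htree c a₀)
        = Abelianization.of (tr htree a₀ a ≫ f ≫ tr htree b a₀) *
          Abelianization.of (tr htree a₀ b ≫ g ≫ tr htree c a₀)
      rw [← map_mul]
      congr 1
      show _ = (tr htree a₀ a ≫ f ≫ tr htree b a₀) ≫ (tr htree a₀ b ≫ g ≫ tr htree c a₀)
      have : tr htree b a₀ ≫ tr htree a₀ b = 𝟙 b := by rw [tr_comp, tr_id]
      simp only [Category.assoc]
      rw [← Category.assoc (tr htree b a₀), this, Category.id_comp]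
    · show Multiplicative.ofAdd (dl a₀ c - dl a₀ a)
        = Multiplicative.ofAdd (dl a₀ b - dl a₀ a) * Multiplicative.ofAdd (dl a₀ c - dl a₀ b)
      rw [← ofAdd_add]
      congr 1
      abel

lemma comm_aux {T : Type*} [CommGroup T] (u m b c : T) (h : b * c = 1) :
    u * m * b * (c * u⁻¹) = m := by
  rw [mul_assoc (u * m), ← mul_assoc b, h, one_mul, mul_comm u m, mul_assoc,
    mul_inv_cancel, mul_one]

end Stmt6Aux

open Stmt6Aux in
/-- if `G` is a transitive (connected) groupoid, `a₀` an object of `G` and `S`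
a wide tree subgroupoid of `G` (exactly one arrow of `S` between any two objects), then the
universal abelianisation `G^totab` of `G` is isomorphic to the direct sum of the
abelianisation of the vertex group `G(a₀)` and the free abelian group on the objects of `G`
other than `a₀`. -/
theorem stmt6 (G : Type u) [Groupoid.{v} G]
    (htrans : ∀ a b : G, Nonempty (a ⟶ b)) (a₀ : G)
    (S : Subgroupoid G) (htree : ∀ a b : G, ∃! f : a ⟶ b, f ∈ S.arrows a b)
    -- (T, υ) is the universal abelianisation of G:
    (T : Type (max u v)) [CommGroup T] (υ : G ⥤ GroupAsGroupoid T)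
    (huniv : ∀ (A : Type (max u v)) (_ : CommGroup A) (Φ : G ⥤ GroupAsGroupoid A),
      ∃! f : T →* A, ∀ {a b : G} (m : a ⟶ b), toGrp (Φ.map m) = f (toGrp (υ.map m))) :
    Nonempty
      (T ≃* Abelianization (a₀ ⟶ a₀) ×
        Multiplicative (FreeAbelianGroup {a : G // a ≠ a₀})) := by
  classical
  set A := Abelianization (a₀ ⟶ a₀) × Multiplicative (FreeAbelianGroup {a : G // a ≠ a₀})
    with hA
  -- the candidate map T →* A from the universal property
  obtain ⟨f, hf, -⟩ := huniv A inferInstance (Phi htree a₀)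
  -- υ as a group homomorphism on each hom-set, assembled into maps into T
  -- φ₁ : Abelianization (a₀ ⟶ a₀) →* T
  have hmul : ∀ {a b c : G} (m : a ⟶ b) (n : b ⟶ c),
      toGrp (υ.map (m ≫ n)) = toGrp (υ.map m) * toGrp (υ.map n) := by
    intro a b c m n
    rw [υ.map_comp]; rfl
  have hone : ∀ a : G, toGrp (υ.map (𝟙 a)) = 1 := by
    intro a; rw [υ.map_id]; rfl
  let φ₀ : (a₀ ⟶ a₀) →* T :=
    { toFun := fun m => toGrp (υ.map m)
      map_one' := hone a₀
      map_mul' := fun m n => hmul m n }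
  let φ₁ : Abelianization (a₀ ⟶ a₀) →* T := Abelianization.lift φ₀
  -- ψ : Multiplicative (FreeAbelianGroup {a // a ≠ a₀}) →* T
  let L : FreeAbelianGroup {a : G // a ≠ a₀} →+ Additive T :=
    FreeAbelianGroup.lift (fun x => Additive.ofMul (toGrp (υ.map (tr htree a₀ x.1))))
  let ψ : Multiplicative (FreeAbelianGroup {a : G // a ≠ a₀}) →* T :=
    AddMonoidHom.toMultiplicativeLeft L
  let g : A →* T := φ₁.coprod ψ
  -- ψ on the generators `dl`
  have hψ : ∀ a : G, ψ (Multiplicative.ofAdd (dl a₀ a)) = toGrp (υ.map (tr htree a₀ a)) := by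
    intro a
    by_cases h : a = a₀
    · subst h
      rw [dl_a₀, tr_id, hone]
      exact map_one ψ
    · rw [dl_ne a₀ a h]
      show Additive.toMul (L (FreeAbelianGroup.of ⟨a, h⟩)) = _
      rw [FreeAbelianGroup.lift_apply_of]
      rfl
  have hψinv : ∀ a : G,
      (toGrp (υ.map (tr htree a₀ a)))⁻¹ = ψ (Multiplicative.ofAdd (-dl a₀ a)) := by
    intro a
    rw [← hψ a]
    rw [← map_inv ψ]
    rfl
  -- g ∘ f fixes every υ.map m
  have hgf : ∀ {a b : G} (m : a ⟶ b), g (f (toGrp (υ.map m))) = toGrp (υ.map m) := by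
    intro a b m
    rw [← hf m]
    show φ₁ (Abelianization.of (tr htree a₀ a ≫ m ≫ tr htree b a₀)) *
      ψ (Multiplicative.ofAdd (dl a₀ b - dl a₀ a)) = toGrp (υ.map m)
    have h1 : φ₁ (Abelianization.of (tr htree a₀ a ≫ m ≫ tr htree b a₀))
        = toGrp (υ.map (tr htree a₀ a)) * toGrp (υ.map m) * toGrp (υ.map (tr htree b a₀)) := by
      show φ₀ (tr htree a₀ a ≫ m ≫ tr htree b a₀) = _
      show toGrp (υ.map (tr htree a₀ a ≫ m ≫ tr htree b a₀)) = _
      rw [hmul, hmul, mul_assoc]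
    have h2 : ψ (Multiplicative.ofAdd (dl a₀ b - dl a₀ a))
        = toGrp (υ.map (tr htree a₀ b)) * (toGrp (υ.map (tr htree a₀ a)))⁻¹ := by
      rw [sub_eq_add_neg, ofAdd_add, map_mul, hψ b, hψinv a]
    rw [h1, h2]
    exact comm_aux _ _ _ _ (by rw [← hmul, tr_comp, tr_id, hone])
  -- g ∘ f = id by uniqueness
  obtain ⟨i, -, hiu⟩ := huniv T inferInstance υ
  have hgfid : g.comp f = MonoidHom.id T := by
    have h1 : g.comp f = i := hiu _ (fun {a b} m => (hgf m).symm)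
    have h2 : MonoidHom.id T = i := hiu _ (fun {a b} m => rfl)
    rw [h1, h2]
  have hleft : ∀ t : T, g (f t) = t := fun t => DFunLike.congr_fun hgfid t
  -- f ∘ g = id, checked on each factor
  have hright1 : ∀ x : Abelianization (a₀ ⟶ a₀), f (g (x, 1)) = (x, 1) := by
    have : (f.comp g).comp (MonoidHom.inl (Abelianization (a₀ ⟶ a₀))
        (Multiplicative (FreeAbelianGroup {a : G // a ≠ a₀})))
        = MonoidHom.inl _ _ := by
      apply Abelianization.hom_ext
      apply MonoidHom.ext
      intro m
      show f (g (Abelianization.of m, 1)) = (Abelianization.of m, 1)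
      have hg : g (Abelianization.of m, 1) = toGrp (υ.map m) := by
        show φ₁ (Abelianization.of m) * ψ 1 = _
        rw [map_one, mul_one]
        rfl
      rw [hg, ← hf m]
      show (Abelianization.of (tr htree a₀ a₀ ≫ m ≫ tr htree a₀ a₀),
        Multiplicative.ofAdd (dl a₀ a₀ - dl a₀ a₀)) = _
      rw [tr_id, Category.id_comp, Category.comp_id, sub_self]
      rfl
    intro x
    exact DFunLike.congr_fun this x
  have hright2 : ∀ y : FreeAbelianGroup {a : G // a ≠ a₀},
      f (g (1, Multiplicative.ofAdd y)) = (1, Multiplicative.ofAdd y) := by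
    intro y
    induction y using FreeAbelianGroup.induction_on with
    | zero =>
      show f (g (1, 1)) = (1, 1)
      rw [show ((1, 1) : A) = 1 from rfl, map_one, map_one]
    | of x =>
      have hg : g (1, Multiplicative.ofAdd (FreeAbelianGroup.of x))
          = toGrp (υ.map (tr htree a₀ x.1)) := by
        show φ₁ 1 * ψ (Multiplicative.ofAdd (FreeAbelianGroup.of x)) = _
        rw [map_one, one_mul, ← dl_ne a₀ x.1 x.2, hψ]
      rw [hg, ← hf (tr htree a₀ x.1)]
      show (Abelianization.of (tr htree a₀ a₀ ≫ tr htree a₀ x.1 ≫ tr htree x.1 a₀),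
        Multiplicative.ofAdd (dl a₀ x.1 - dl a₀ a₀)) = _
      rw [tr_id, Category.id_comp, tr_comp, tr_id, dl_a₀, sub_zero, dl_ne a₀ x.1 x.2]
      refine Prod.ext ?_ rfl
      exact map_one Abelianization.of
    | neg x hx =>
      have h1 : ((1, Multiplicative.ofAdd (-FreeAbelianGroup.of x)) : A)
          = ((1, Multiplicative.ofAdd (FreeAbelianGroup.of x)) : A)⁻¹ :=
        Prod.ext inv_one.symm rfl
      rw [h1, map_inv, map_inv, hx]
    | add z w hz hw =>
      have h1 : ((1, Multiplicative.ofAdd (z + w)) : A)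
          = (1, Multiplicative.ofAdd z) * (1, Multiplicative.ofAdd w) := by
        refine Prod.ext (one_mul 1).symm ?_
        exact congrArg Multiplicative.ofAdd rfl
      rw [h1, map_mul, map_mul, hz, hw]
  have hright : ∀ x : A, f (g x) = x := by
    intro x
    have hx : x = (x.1, 1) * (1, x.2) := by
      refine Prod.ext ?_ ?_
      · exact (mul_one x.1).symm
      · exact (one_mul x.2).symm
    have h2 := hright2 x.2.toAdd
    simp only [ofAdd_toAdd] at h2
    rw [hx, map_mul, map_mul, hright1 x.1, h2]
  refine ⟨MulEquiv.mk ⟨⇑f, ⇑g, hleft, hright⟩ ?_⟩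
  exact f.map_mul
end

section
/- Let φ : F → G be a surjective group morphism with kernel N, and let F̂ be the pullback of the universal covering groupoid of G along φ. Then there is an isomorphism of abelian groups F̂^totab ≅ N^ab ⊕ A, where A is the free abelian group on the set G \ {1}; moreover A is isomorphic as a G-module to the augmentation ideal IG via the identification of the basis element at g with g − 1. -/
open CategoryTheory

universe u v

open MonoidAlgebra

noncomputable def augM (G : Type*) [Group G] : MonoidAlgebra ℤ G →ₐ[ℤ] ℤ :=
  MonoidAlgebra.lift ℤ ℤ G 1

noncomputable def IG (G : Type*) [Group G] : AddSubgroup (MonoidAlgebra ℤ G) :=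
  AddMonoidHom.ker (augM G).toAddMonoidHom

noncomputable def eAug (G : Type*) [Group G] (g : G) : MonoidAlgebra ℤ G :=
  MonoidAlgebra.of ℤ G g - 1

theorem eAug_mem (G : Type*) [Group G] (g : G) : eAug G g ∈ IG G := by
  simp [eAug, IG, augM, AddMonoidHom.mem_ker]

variable {F : Type u} {G : Type v} [Group F] [Group G]

/-- The pullback `F̂` of the universal covering groupoid of `G` along `φ : F → G`:
objects the elements of `G`, morphisms the pairs `(u, g) : φ(u)g → g` with `u ∈ F`,
`g ∈ G`, composition `(u, φ(v)g)(v, g) = (uv, g)`. -/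
def PullbackCover (φ : F →* G) : Type v := G

instance (φ : F →* G) : Groupoid (PullbackCover φ) where
  Hom a b := { u : F // φ u * (show G from b) = show G from a }
  id a := ⟨1, by rw [map_one]; exact one_mul _⟩
  comp {a b c} f g := ⟨f.1 * g.1, by
    have hf := f.2; have hg := g.2
    rw [map_mul, mul_assoc, hg, hf]⟩
  id_comp f := by apply Subtype.ext; simp
  comp_id f := by apply Subtype.ext; simp
  assoc f g h := by apply Subtype.ext; simp [mul_assoc]
  inv {a b} f := ⟨f.1⁻¹, by
    have h := f.2
    have h2 : (φ f.1)⁻¹ * (φ f.1 * (show G from b)) = show G from b :=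
      inv_mul_cancel_left _ _
    rw [h, ← map_inv] at h2
    exact h2⟩
  inv_comp f := by apply Subtype.ext; simp
  comp_inv f := by apply Subtype.ext; simp

open Classical in
noncomputable def eFA {G : Type*} [Group G] (g : G) : FreeAbelianGroup {g : G // g ≠ 1} :=
  if h : g = 1 then 0 else FreeAbelianGroup.of ⟨g, h⟩

lemma eFA_one : eFA (1 : G) = 0 := by rw [eFA, dif_pos rfl]

lemma eFA_ne {g : G} (h : g ≠ 1) : eFA g = FreeAbelianGroup.of ⟨g, h⟩ := by
  rw [eFA, dif_neg h]

section Part1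

variable (φ : F →* G) (hφ : Function.Surjective φ)

/-- The underlying element of `G` of an object of the pullback cover. -/
def og (a : PullbackCover φ) : G := a

/-- The object of the pullback cover corresponding to an element of `G`. -/
def obP (g : G) : PullbackCover φ := g

variable {φ} in
lemma toGrp_comp {A : Type*} [Group A] {a b c : GroupAsGroupoid A} (f : a ⟶ b) (g : b ⟶ c) :
    toGrp (f ≫ g) = toGrp f * toGrp g := rfl

lemma fmap_comp {A : Type*} [Group A] (Φ : PullbackCover φ ⥤ GroupAsGroupoid A)
    {a b c : PullbackCover φ} (f : a ⟶ b) (g : b ⟶ c) :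
    toGrp (Φ.map (f ≫ g)) = toGrp (Φ.map f) * toGrp (Φ.map g) := by
  rw [Φ.map_comp]; rfl

lemma fmap_id {A : Type*} [Group A] (Φ : PullbackCover φ ⥤ GroupAsGroupoid A)
    (a : PullbackCover φ) : toGrp (Φ.map (𝟙 a)) = 1 := by
  rw [Φ.map_id]; rfl

lemma fmap_inv {A : Type*} [Group A] (Φ : PullbackCover φ ⥤ GroupAsGroupoid A)
    {a b : PullbackCover φ} (f : a ⟶ b) :
    toGrp (Φ.map (Groupoid.inv f)) = (toGrp (Φ.map f))⁻¹ := by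
  have h : toGrp (Φ.map f) * toGrp (Φ.map (Groupoid.inv f)) = 1 := by
    rw [← fmap_comp, Groupoid.comp_inv, fmap_id]
  exact eq_inv_of_mul_eq_one_right h

/-- Build a morphism in the pullback cover. -/
def pmor (u : F) (a b : G) (h : φ u * b = a) : (obP φ a) ⟶ (obP φ b) := ⟨u, h⟩

open Classical in
/-- A section of `φ` sending `1` to `1`. -/
noncomputable def sec (g : G) : F := if g = 1 then 1 else (hφ g).choose

lemma sec_spec (g : G) : φ (sec φ hφ g) = g := by
  rw [sec]
  split
  · simp_all
  · exact (hφ g).choose_spec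

lemma sec_one : sec φ hφ 1 = 1 := by rw [sec, if_pos rfl]

/-- The "tree" morphism `g ⟶ 1`. -/
noncomputable def tmor (g : G) : (obP φ g) ⟶ (obP φ 1) :=
  pmor φ (sec φ hφ g) g 1 (by rw [mul_one, sec_spec])

/-- The loop at `1` corresponding to an element of the kernel. -/
def kloop (n : φ.ker) : (obP φ 1) ⟶ (obP φ 1) :=
  pmor φ n.1 1 1 (by rw [mul_one]; exact n.2)

lemma kloop_one : kloop φ 1 = 𝟙 (obP φ 1) := rfl

lemma kloop_mul (n m : φ.ker) : kloop φ (n * m) = kloop φ n ≫ kloop φ m := rfl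

/-- The kernel element attached to a morphism `a ⟶ b`. -/
noncomputable def nu {a b : PullbackCover φ} (m : a ⟶ b) : φ.ker :=
  ⟨(sec φ hφ (og φ a))⁻¹ * m.1 * sec φ hφ (og φ b), by
    have hm : φ m.1 * (og φ b) = og φ a := m.2
    have h2 : φ m.1 = og φ a * (og φ b)⁻¹ := by rw [← hm]; group
    simp only [MonoidHom.mem_ker, map_mul, map_inv, sec_spec, h2]
    group⟩

lemma decomp {a b : PullbackCover φ} (m : a ⟶ b) :
    m = tmor φ hφ (og φ a) ≫ kloop φ (nu φ hφ m) ≫ Groupoid.inv (tmor φ hφ (og φ b)) := by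
  apply Subtype.ext
  show m.1 = sec φ hφ (og φ a) *
    ((sec φ hφ (og φ a))⁻¹ * m.1 * sec φ hφ (og φ b) * (sec φ hφ (og φ b))⁻¹)
  group

lemma nu_id (a : PullbackCover φ) : nu φ hφ (𝟙 a) = 1 := by
  apply Subtype.ext
  show (sec φ hφ (og φ a))⁻¹ * 1 * sec φ hφ (og φ a) = 1
  group

lemma nu_comp {a b c : PullbackCover φ} (f : a ⟶ b) (g : b ⟶ c) :
    nu φ hφ (f ≫ g) = nu φ hφ f * nu φ hφ g := by
  apply Subtype.ext
  show (sec φ hφ (og φ a))⁻¹ * (f.1 * g.1) * sec φ hφ (og φ c) =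
    ((sec φ hφ (og φ a))⁻¹ * f.1 * sec φ hφ (og φ b)) *
      ((sec φ hφ (og φ b))⁻¹ * g.1 * sec φ hφ (og φ c))
  group

lemma nu_kloop (n : φ.ker) : nu φ hφ (kloop φ n) = n := by
  apply Subtype.ext
  show (sec φ hφ (og φ (obP φ 1)))⁻¹ * n.1 * sec φ hφ (og φ (obP φ 1)) = n.1
  have h : og φ (obP φ (1 : G)) = 1 := rfl
  rw [h, sec_one]
  group

lemma nu_tmor (g : G) : nu φ hφ (tmor φ hφ g) = 1 := by
  apply Subtype.ext
  show (sec φ hφ (og φ (obP φ g)))⁻¹ * sec φ hφ g * sec φ hφ (og φ (obP φ 1)) = 1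
  have h : og φ (obP φ (1 : G)) = 1 := rfl
  have h2 : og φ (obP φ g) = g := rfl
  rw [h, h2, sec_one]
  group

lemma tmor_one : tmor φ hφ 1 = 𝟙 (obP φ 1) :=
  Subtype.ext (sec_one φ hφ)

/-- The candidate total abelianisation group. -/
abbrev Cgrp : Type (max u v) :=
  Abelianization φ.ker × Multiplicative (FreeAbelianGroup {g : G // g ≠ 1})

/-- The universal functor into `Cgrp`. -/
noncomputable def Phi0 : PullbackCover φ ⥤ GroupAsGroupoid (Cgrp φ) where
  obj _ := ⟨⟩
  map {a b} m :=
    show Cgrp φ from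
      (Abelianization.of (nu φ hφ m), Multiplicative.ofAdd (eFA (og φ a) - eFA (og φ b)))
  map_id a := by
    show (Abelianization.of (nu φ hφ (𝟙 a)),
      Multiplicative.ofAdd (eFA (og φ a) - eFA (og φ a))) = (1 : Cgrp φ)
    rw [nu_id, map_one, sub_self]
    rfl
  map_comp {a b c} f g := by
    show (Abelianization.of (nu φ hφ (f ≫ g)),
        Multiplicative.ofAdd (eFA (og φ a) - eFA (og φ c))) =
      ((Abelianization.of (nu φ hφ f), Multiplicative.ofAdd (eFA (og φ a) - eFA (og φ b))) :
          Cgrp φ) *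
      (Abelianization.of (nu φ hφ g), Multiplicative.ofAdd (eFA (og φ b) - eFA (og φ c)))
    rw [Prod.mk_mul_mk, nu_comp, map_mul, ← ofAdd_add]
    congr 1
    congr 1
    abel

lemma Phi0_map {a b : PullbackCover φ} (m : a ⟶ b) :
    toGrp ((Phi0 φ hφ).map m) =
      (Abelianization.of (nu φ hφ m),
        Multiplicative.ofAdd (eFA (og φ a) - eFA (og φ b))) := rfl

section TU

variable (T : Type (max u v)) [CommGroup T] (υ : PullbackCover φ ⥤ GroupAsGroupoid T)

/-- The kernel-to-`T` homomorphism. -/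
noncomputable def hN : φ.ker →* T where
  toFun n := toGrp (υ.map (kloop φ n))
  map_one' := by
    show toGrp (υ.map (kloop φ 1)) = 1
    rw [kloop_one, fmap_id]
  map_mul' n m := by
    show toGrp (υ.map (kloop φ (n * m))) = _
    rw [kloop_mul, fmap_comp]

noncomputable def gAb : Abelianization φ.ker →* T := Abelianization.lift (hN φ T υ)

noncomputable def gFA : Multiplicative (FreeAbelianGroup {g : G // g ≠ 1}) →* T :=
  AddMonoidHom.toMultiplicativeLeft
    (FreeAbelianGroup.lift fun g => Additive.ofMul (toGrp (υ.map (tmor φ hφ g.1))))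

lemma gFA_of (g : {g : G // g ≠ 1}) :
    gFA φ hφ T υ (Multiplicative.ofAdd (FreeAbelianGroup.of g)) =
      toGrp (υ.map (tmor φ hφ g.1)) := by
  show Additive.toMul ((FreeAbelianGroup.lift fun g =>
      Additive.ofMul (toGrp (υ.map (tmor φ hφ g.1)))) (FreeAbelianGroup.of g)) = _
  rw [FreeAbelianGroup.lift_apply_of]
  rfl

lemma gFA_eFA (g : G) :
    gFA φ hφ T υ (Multiplicative.ofAdd (eFA g)) = toGrp (υ.map (tmor φ hφ g)) := by
  by_cases h : g = 1
  · subst h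
    rw [eFA_one, tmor_one, fmap_id, ofAdd_zero, map_one]
  · rw [eFA_ne h, gFA_of]

/-- The homomorphism `Cgrp → T`. -/
noncomputable def gHom : Cgrp φ →* T :=
  ((gAb φ T υ).comp (MonoidHom.fst _ _)) * ((gFA φ hφ T υ).comp (MonoidHom.snd _ _))

lemma gHom_apply (x : Abelianization φ.ker)
    (y : Multiplicative (FreeAbelianGroup {g : G // g ≠ 1})) :
    gHom φ hφ T υ (x, y) = gAb φ T υ x * gFA φ hφ T υ y := rfl

lemma g_compat {a b : PullbackCover φ} (m : a ⟶ b) :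
    gHom φ hφ T υ (toGrp ((Phi0 φ hφ).map m)) = toGrp (υ.map m) := by
  rw [Phi0_map, gHom_apply, gAb, Abelianization.lift_apply_of]
  have hsub : Multiplicative.ofAdd (eFA (og φ a) - eFA (og φ b)) =
      Multiplicative.ofAdd (eFA (og φ a)) * (Multiplicative.ofAdd (eFA (og φ b)))⁻¹ := by
    rw [sub_eq_add_neg, ofAdd_add, ofAdd_neg]
  rw [hsub, map_mul, map_inv, gFA_eFA, gFA_eFA]
  conv_rhs => rw [decomp φ hφ m]
  erw [fmap_comp, fmap_comp, fmap_inv]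
  show hN φ T υ (nu φ hφ m) * _ = _
  simp only [hN, MonoidHom.coe_mk, OneHom.coe_mk]
  simp [mul_comm, mul_left_comm, mul_assoc]
  rfl

end TU
end Part1

section Part2
variable (G)

noncomputable def thetaHom : FreeAbelianGroup {g : G // g ≠ 1} →+ IG G :=
  FreeAbelianGroup.lift (fun g => ⟨eAug G g.1, eAug_mem G g.1⟩)

noncomputable def psiFull : MonoidAlgebra ℤ G →+ FreeAbelianGroup {g : G // g ≠ 1} :=
  (Finsupp.liftAddHom (fun g => zmultiplesHom _ (eFA g))).comp
    MonoidAlgebra.coeffAddEquiv.toAddMonoidHom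

lemma psiFull_single (g : G) (n : ℤ) :
    psiFull G (MonoidAlgebra.single g n) = n • eFA g :=
  Finsupp.liftAddHom_apply_single _ _ _

lemma augM_single (g : G) (n : ℤ) : augM G (MonoidAlgebra.single g n) = n := by
  simp [augM, MonoidAlgebra.lift_apply]

lemma single_one (n : ℤ) : MonoidAlgebra.single (1:G) n = n • (1 : MonoidAlgebra ℤ G) := by
  simp [MonoidAlgebra.one_def, MonoidAlgebra.smul_single]

lemma thetaHom_of (g : {g : G // g ≠ 1}) :
    thetaHom G (FreeAbelianGroup.of g) = ⟨eAug G g.1, eAug_mem G g.1⟩ :=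
  FreeAbelianGroup.lift_apply_of _ _

lemma theta_psi (x : MonoidAlgebra ℤ G) :
    ((thetaHom G) (psiFull G x) : MonoidAlgebra ℤ G) = x - (augM G x) • 1 := by
  induction x using MonoidAlgebra.induction_linear with
  | zero => simp
  | add a b ha hb =>
      rw [map_add, map_add, AddSubgroup.coe_add, ha, hb, map_add, add_smul,
        sub_add_sub_comm]
  | single g n =>
      rw [augM_single, psiFull_single]
      by_cases h : g = 1
      · subst h
        rw [eFA_one, smul_zero, map_zero, single_one]
        simp
      · rw [eFA_ne h, map_zsmul, thetaHom_of]
        have h2 : ((n • (⟨eAug G g, eAug_mem G g⟩ : IG G) : IG G) : MonoidAlgebra ℤ G)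
            = n • eAug G g := rfl
        rw [h2, eAug]
        have h3 : (MonoidAlgebra.of ℤ G g : MonoidAlgebra ℤ G) = MonoidAlgebra.single g 1 := rfl
        rw [h3, smul_sub, MonoidAlgebra.smul_single]
        simp

noncomputable def psiHom : (IG G : Type _) →+ FreeAbelianGroup {g : G // g ≠ 1} :=
  (psiFull G).comp (IG G).subtype

lemma theta_psi_id : (thetaHom G).comp (psiHom G) = AddMonoidHom.id _ :=
  AddMonoidHom.ext fun x => by
    have h := theta_psi G (x : MonoidAlgebra ℤ G)
    have hx : augM G (x : MonoidAlgebra ℤ G) = 0 := x.2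
    rw [hx, zero_smul, sub_zero] at h
    exact Subtype.ext h

lemma psi_theta_id : (psiHom G).comp (thetaHom G) = AddMonoidHom.id _ := by
  ext g
  rw [AddMonoidHom.comp_apply, thetaHom_of, AddMonoidHom.id_apply]
  show psiFull G (eAug G g.1) = FreeAbelianGroup.of g
  have h3 : (MonoidAlgebra.of ℤ G g.1 : MonoidAlgebra ℤ G) = MonoidAlgebra.single g.1 1 := rfl
  rw [eAug, h3, MonoidAlgebra.one_def, map_sub, psiFull_single, psiFull_single,
    eFA_one, eFA_ne g.2]
  simp

noncomputable def thetaEquiv : FreeAbelianGroup {g : G // g ≠ 1} ≃+ IG G :=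
  AddMonoidHom.toAddEquiv (thetaHom G) (psiHom G) (psi_theta_id G) (theta_psi_id G)

lemma thetaEquiv_of (g : {g : G // g ≠ 1}) :
    thetaEquiv G (FreeAbelianGroup.of g) = ⟨eAug G g.1, eAug_mem G g.1⟩ :=
  thetaHom_of G g

lemma eAug_mul (h g : G) :
    eAug G (h * g) = eAug G h * MonoidAlgebra.of ℤ G g + eAug G g := by
  simp only [eAug, map_mul, sub_mul, one_mul]
  abel

end Part2

/-- if `φ : F → G` is surjective with kernel `N` and `F̂` is the pullback of
the universal covering groupoid of `G` along `φ`, then the universal abelianisation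
`F̂^totab` is isomorphic to `N^ab ⊕ A`, where `A` is the free abelian group on `G \ {1}`;
moreover `A` is isomorphic as a `G`-module to the augmentation ideal `IG`, the basis
element at `g` corresponding to `g - 1` (so that `hg - 1 = (h - 1)·g + (g - 1)` matches
the `G`-action on `A`). -/
theorem stmt15 (φ : F →* G) (hφ : Function.Surjective φ)
    -- (T, υ) is the universal abelianisation of F̂:
    (T : Type (max u v)) [CommGroup T] (υ : PullbackCover φ ⥤ GroupAsGroupoid T)
    (huniv : ∀ (A : Type (max u v)) (_ : CommGroup A)
      (Φ : PullbackCover φ ⥤ GroupAsGroupoid A),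
      ∃! f : T →* A, ∀ {a b : PullbackCover φ} (m : a ⟶ b),
        toGrp (Φ.map m) = f (toGrp (υ.map m))) :
    Nonempty (T ≃* Abelianization φ.ker ×
        Multiplicative (FreeAbelianGroup {g : G // g ≠ 1})) ∧
    (∃ θ : FreeAbelianGroup {g : G // g ≠ 1} ≃+ IG G,
      ∀ g : {g : G // g ≠ 1},
        θ (FreeAbelianGroup.of g) = ⟨eAug G g.1, eAug_mem G g.1⟩) ∧
    (∀ h g : G, eAug G (h * g) = eAug G h * MonoidAlgebra.of ℤ G g + eAug G g) := by
  refine ⟨?_, ⟨thetaEquiv G, thetaEquiv_of G⟩, eAug_mul G⟩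
  obtain ⟨f, hf, -⟩ := huniv (Cgrp φ) inferInstance (Phi0 φ hφ)
  obtain ⟨e, he, heu⟩ := huniv T inferInstance υ
  have h1 : (gHom φ hφ T υ).comp f = MonoidHom.id T := by
    have e1 := heu ((gHom φ hφ T υ).comp f)
      (fun {a b} m => by rw [MonoidHom.comp_apply, ← hf m, g_compat])
    have e2 := heu (MonoidHom.id T) (fun {a b} m => rfl)
    rw [e1, e2]
  have hx : ∀ x : Abelianization φ.ker,
      f (gHom φ hφ T υ (x, 1)) = (x, 1) := by
    intro x
    have hcomp : ((f.comp (gHom φ hφ T υ)).comp (MonoidHom.inl _ _)) =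
        MonoidHom.inl (Abelianization φ.ker)
          (Multiplicative (FreeAbelianGroup {g : G // g ≠ 1})) := by
      apply Abelianization.hom_ext
      apply MonoidHom.ext
      intro n
      show f (gHom φ hφ T υ (Abelianization.of n, 1)) = (Abelianization.of n, 1)
      have hg : gHom φ hφ T υ (Abelianization.of n, 1) = toGrp (υ.map (kloop φ n)) := by
        rw [gHom_apply, map_one, mul_one, gAb, Abelianization.lift_apply_of]
        rfl
      rw [hg, ← hf (kloop φ n), Phi0_map, nu_kloop, sub_self]
      rfl
    exact DFunLike.congr_fun hcomp x
  have hy : ∀ y : Multiplicative (FreeAbelianGroup {g : G // g ≠ 1}),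
      f (gHom φ hφ T υ (1, y)) = (1, y) := by
    intro y
    have hcomp : ((f.comp (gHom φ hφ T υ)).comp (MonoidHom.inr _ _)) =
        MonoidHom.inr (Abelianization φ.ker)
          (Multiplicative (FreeAbelianGroup {g : G // g ≠ 1})) := by
      have hadd : MonoidHom.toAdditiveRight
            ((f.comp (gHom φ hφ T υ)).comp (MonoidHom.inr _ _)) =
          MonoidHom.toAdditiveRight (MonoidHom.inr _ _) := by
        ext1 g
        show Additive.ofMul
            (f (gHom φ hφ T υ (1, Multiplicative.ofAdd (FreeAbelianGroup.of g)))) =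
          Additive.ofMul ((1 : Abelianization φ.ker),
            Multiplicative.ofAdd (FreeAbelianGroup.of g))
        congr 1
        have hg : gHom φ hφ T υ (1, Multiplicative.ofAdd (FreeAbelianGroup.of g)) =
            toGrp (υ.map (tmor φ hφ g.1)) := by
          rw [gHom_apply, map_one, one_mul, gFA_of]
        rw [hg, ← hf (tmor φ hφ g.1), Phi0_map, nu_tmor, map_one]
        have h1' : og φ (obP φ (1 : G)) = 1 := rfl
        have h2' : og φ (obP φ g.1) = g.1 := rfl
        rw [h1', h2', eFA_one, sub_zero, eFA_ne g.2]
      exact MonoidHom.toAdditiveRight.injective hadd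
    exact DFunLike.congr_fun hcomp y
  have h2 : f.comp (gHom φ hφ T υ) = MonoidHom.id (Cgrp φ) := by
    apply MonoidHom.ext
    rintro ⟨x, y⟩
    have hz : ((x, y) : Cgrp φ) = (x, 1) * (1, y) := by
      rw [Prod.mk_mul_mk, mul_one, one_mul]
    rw [MonoidHom.comp_apply, MonoidHom.id_apply, hz, map_mul, map_mul, hx, hy]
  exact ⟨MonoidHom.toMulEquiv f (gHom φ hφ T υ) h1 h2⟩
end
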